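/- Let H be a bounded self-adjoint operator on ℓ²(ℕ) of class C¹ with respect to the position operator X. Then for all t ∈ ℝ and all φ ∈ D(X), ‖e^{iHt}φ‖_X² − ‖φ‖_X² = 2 ∫₀^t Re⟨i(ad_X H) e^{iHs}φ, X e^{iHs}φ⟩ ds, where ‖ψ‖_X² = ‖ψ‖² + ‖Xψ‖². -/

import Mathlib

open scoped InnerProductSpace
open Complex

noncomputable section

/-- The `n`-th Fourier coefficient of a `2π`-periodic function `f : ℝ → ℂ`. -/
def fcoef (f : ℝ → ℂ) (n : ℤ) : ℂ :=
  (1 / (2 * Real.pi)) • ∫ θ in (0:ℝ)..(2 * Real.pi), Complex.exp (-Complex.I * n * θ) * f θ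

variable {E : Type*} [NormedAddCommGroup E] [InnerProductSpace ℂ E] [CompleteSpace E]

/-- `e` is the canonical orthonormal (Hilbert) basis of `ℓ²(ℕ)`, abstractly:
an orthonormal family with dense span. -/
def IsONBasis (e : ℕ → E) : Prop :=
  Orthonormal ℂ e ∧ (Submodule.span ℂ (Set.range e)).topologicalClosure = ⊤

/-- `T` is the Toeplitz operator with symbol `f`: `⟪e n, T (e k)⟫ = f̂(n−k)`. -/
def IsToeplitz (e : ℕ → E) (f : ℝ → ℂ) (T : E →L[ℂ] E) : Prop :=
  ∀ n k : ℕ, ⟪e n, T (e k)⟫_ℂ = fcoef f ((n : ℤ) - k)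

/-- `T` is the Hankel operator with symbol `f`: `⟪e n, T (e k)⟫ = f̂(n+k+1)`
(0-based indexing of the paper's `f̂_{n+k-1}`, `n, k ≥ 1`). -/
def IsHankel (e : ℕ → E) (f : ℝ → ℂ) (T : E →L[ℂ] E) : Prop :=
  ∀ n k : ℕ, ⟪e n, T (e k)⟫_ℂ = fcoef f ((n : ℤ) + k + 1)

/-- `X` is the (self-adjoint) position operator: `X e_n = (n+1) e_n` (0-based). -/
def IsPosOp (e : ℕ → E) (X : E →ₗ.[ℂ] E) : Prop :=
  X.adjoint = X ∧ ∀ q : ℕ, ∃ hq : e q ∈ X.domain, X ⟨e q, hq⟩ = ((q : ℂ) + 1) • e q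

/-- `A` is the self-adjoint operator `A_g`, the closure of `½(T_g X + X T_g)`;
being essentially self-adjoint, it is the unique self-adjoint operator with
matrix elements `((p+q+2)/2)·ĝ(p−q)` on the canonical basis (0-based). -/
def IsAg (e : ℕ → E) (g : ℝ → ℂ) (A : E →ₗ.[ℂ] E) : Prop :=
  A.adjoint = A ∧ ∀ q : ℕ, ∃ hq : e q ∈ A.domain, ∀ p : ℕ,
    ⟪e p, A ⟨e q, hq⟩⟫_ℂ = (((p : ℂ) + q + 2) / 2) * fcoef g ((p : ℤ) - q)

/-- `C = ad_A B`: the commutator form of `A` and `B` on `D(A) × D(A)` is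
represented by the bounded operator `C`; in particular `B ∈ C¹(A)`. -/
def CommutatorOf (A : E →ₗ.[ℂ] E) (B C : E →L[ℂ] E) : Prop :=
  ∀ φ ψ : A.domain, ⟪A φ, B (ψ : E)⟫_ℂ - ⟪(φ : E), B (A ψ)⟫_ℂ = ⟪(φ : E), C (ψ : E)⟫_ℂ

/-- The unitary group `e^{iHt}` generated by a bounded operator `H`. -/
def expIt (Hop : E →L[ℂ] E) (t : ℝ) : E →L[ℂ] E :=
  NormedSpace.exp ((Complex.I * (t : ℂ)) • Hop)

open scoped ENNReal
set_option maxHeartbeats 1000000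
set_option synthInstance.maxHeartbeats 400000

set_option linter.unusedSectionVars false
namespace Stmt19Aux

variable {E : Type*} [NormedAddCommGroup E] [InnerProductSpace ℂ E] [CompleteSpace E]

lemma two_toReal : ((2:ℝ≥0∞)).toReal = 2 := by norm_num

/-- membership in ℓ² by bounded comparison -/
lemma memℓp_two_of_le {f : lp (fun _ : ℕ => ℂ) 2} {g : ℕ → ℂ} {C : ℝ}
    (h : ∀ n, ‖g n‖ ≤ C * ‖f n‖) : Memℓp g 2 := by
  apply memℓp_gen
  have hf : Summable fun n => ‖f n‖ ^ ((2:ℝ≥0∞)).toReal := (lp.memℓp f).summable (by norm_num)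
  rw [two_toReal] at hf ⊢
  have hf' : Summable fun n => ‖f n‖ ^ (2:ℕ) := by
    simpa [Real.rpow_natCast] using hf
  have hs : Summable fun n => ‖g n‖ ^ (2:ℕ) := by
    refine Summable.of_nonneg_of_le (fun n => by positivity) (fun n => ?_) (hf'.mul_left (C^2))
    have h2 : ‖g n‖ ^ (2:ℕ) ≤ (C * ‖f n‖) ^ (2:ℕ) := by
      nlinarith [h n, norm_nonneg (f n), norm_nonneg (g n)]
    calc ‖g n‖ ^ (2:ℕ) ≤ (C * ‖f n‖) ^ (2:ℕ) := h2
      _ = C ^ (2:ℕ) * ‖f n‖ ^ (2:ℕ) := by ring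
  simpa [Real.rpow_natCast] using hs

/-- multiplication by a bounded real sequence, as a linear map on ℓ² -/
def mulSeq (d : ℕ → ℝ) (C : ℝ) (hd : ∀ n, |d n| ≤ C) :
    lp (fun _ : ℕ => ℂ) 2 →ₗ[ℂ] lp (fun _ : ℕ => ℂ) 2 where
  toFun f := ⟨fun n => (d n : ℂ) * f n, memℓp_two_of_le (C := C) (f := f)
    (fun n => by rw [norm_mul, Complex.norm_real]; exact mul_le_mul_of_nonneg_right (by
      simpa [Real.norm_eq_abs] using hd n) (norm_nonneg _))⟩
  map_add' f g := by
    apply lp.ext; funext n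
    simp [mul_add]
    rfl
  map_smul' c f := by
    apply lp.ext; funext n
    simp [lp.coeFn_smul]
    ring

@[simp] lemma mulSeq_apply (d : ℕ → ℝ) (C : ℝ) (hd : ∀ n, |d n| ≤ C)
    (f : lp (fun _ : ℕ => ℂ) 2) (n : ℕ) : (mulSeq d C hd f : ℕ → ℂ) n = (d n : ℂ) * f n := rfl

lemma lp_norm_sq (f : lp (fun _ : ℕ => ℂ) 2) : ‖f‖ ^ (2:ℕ) = ∑' n, ‖f n‖ ^ (2:ℕ) := by
  have := lp.norm_rpow_eq_tsum (p := 2) (by norm_num) f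
  rw [two_toReal] at this
  simpa [Real.rpow_natCast] using this

lemma lp_summable_norm_sq (f : lp (fun _ : ℕ => ℂ) 2) : Summable fun n => ‖f n‖ ^ (2:ℕ) := by
  have hf : Summable fun n => ‖f n‖ ^ ((2:ℝ≥0∞)).toReal := (lp.memℓp f).summable (by norm_num)
  rw [two_toReal] at hf
  simpa [Real.rpow_natCast] using hf

lemma mulSeq_norm_le (d : ℕ → ℝ) (C : ℝ) (hC : 0 ≤ C) (hd : ∀ n, |d n| ≤ C)
    (f : lp (fun _ : ℕ => ℂ) 2) : ‖mulSeq d C hd f‖ ≤ C * ‖f‖ := by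
  have hsq : ‖mulSeq d C hd f‖ ^ (2:ℕ) ≤ (C * ‖f‖) ^ (2:ℕ) := by
    rw [lp_norm_sq]
    have h1 : ∀ n, ‖(mulSeq d C hd f : ℕ → ℂ) n‖ ^ (2:ℕ) ≤ C^(2:ℕ) * ‖f n‖ ^ (2:ℕ) := by
      intro n
      rw [mulSeq_apply, norm_mul, Complex.norm_real]
      have := hd n
      have h0 : (0:ℝ) ≤ ‖f n‖ := norm_nonneg _
      have h1 : |d n| = ‖d n‖ := (Real.norm_eq_abs _).symm
      have h3 : ‖d n‖ * ‖f n‖ ≤ C * ‖f n‖ :=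
        mul_le_mul_of_nonneg_right (h1 ▸ this) h0
      nlinarith [mul_nonneg (norm_nonneg (d n)) h0, h3]
    calc (∑' n, ‖(mulSeq d C hd f : ℕ → ℂ) n‖ ^ (2:ℕ))
        ≤ ∑' n, C^(2:ℕ) * ‖f n‖ ^ (2:ℕ) := by
          refine Summable.tsum_le_tsum h1 (lp_summable_norm_sq _) ?_
          exact (lp_summable_norm_sq f).mul_left _
      _ = C^(2:ℕ) * ∑' n, ‖f n‖ ^ (2:ℕ) := by rw [tsum_mul_left]
      _ = (C * ‖f‖) ^ (2:ℕ) := by rw [← lp_norm_sq]; ring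
  have h2 : (0:ℝ) ≤ C * ‖f‖ := by positivity
  nlinarith [norm_nonneg (mulSeq d C hd f)]


section Diag

variable (b : HilbertBasis ℕ ℂ E)

/-- diagonal operator w.r.t. a Hilbert basis, with real bounded symbol -/
def diag (d : ℕ → ℝ) (C : ℝ) (hC : 0 ≤ C) (hd : ∀ n, |d n| ≤ C) : E →L[ℂ] E :=
  LinearMap.mkContinuous
    ((b.repr.symm.toLinearEquiv.toLinearMap.comp (mulSeq d C hd)).comp
      b.repr.toLinearEquiv.toLinearMap) C
    (fun x => by
      simp only [LinearMap.coe_comp, Function.comp_apply, LinearEquiv.coe_coe,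
        LinearIsometryEquiv.coe_toLinearEquiv]
      rw [b.repr.symm.norm_map]
      calc ‖mulSeq d C hd (b.repr x)‖ ≤ C * ‖b.repr x‖ := mulSeq_norm_le d C hC hd _
        _ = C * ‖x‖ := by rw [b.repr.norm_map])

lemma diag_apply (d : ℕ → ℝ) (C : ℝ) (hC : 0 ≤ C) (hd : ∀ n, |d n| ≤ C) (x : E) :
    diag b d C hC hd x = b.repr.symm (mulSeq d C hd (b.repr x)) := rfl

@[simp] lemma repr_diag (d : ℕ → ℝ) (C : ℝ) (hC : 0 ≤ C) (hd : ∀ n, |d n| ≤ C) (x : E) (n : ℕ) :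
    b.repr (diag b d C hC hd x) n = (d n : ℂ) * b.repr x n := by
  rw [diag_apply, LinearIsometryEquiv.apply_symm_apply]
  rfl

lemma diag_norm_le (d : ℕ → ℝ) (C : ℝ) (hC : 0 ≤ C) (hd : ∀ n, |d n| ≤ C) (x : E) :
    ‖diag b d C hC hd x‖ ≤ C * ‖x‖ := by
  rw [diag_apply, b.repr.symm.norm_map]
  calc ‖mulSeq d C hd (b.repr x)‖ ≤ C * ‖b.repr x‖ := mulSeq_norm_le d C hC hd _
    _ = C * ‖x‖ := by rw [b.repr.norm_map]

lemma inner_eq_tsum_repr (x y : E) :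
    ⟪x, y⟫_ℂ = ∑' n, (starRingEnd ℂ) (b.repr x n) * b.repr y n := by
  rw [← b.repr.inner_map_map x y, lp.inner_eq_tsum]
  refine tsum_congr fun n => ?_
  simp [RCLike.inner_apply, mul_comm]

lemma diag_symm (d : ℕ → ℝ) (C : ℝ) (hC : 0 ≤ C) (hd : ∀ n, |d n| ≤ C) (x y : E) :
    ⟪diag b d C hC hd x, y⟫_ℂ = ⟪x, diag b d C hC hd y⟫_ℂ := by
  rw [inner_eq_tsum_repr b, inner_eq_tsum_repr b]
  refine tsum_congr fun n => ?_
  simp only [repr_diag, map_mul, Complex.conj_ofReal]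
  ring

end Diag

section PosOp

variable (b : HilbertBasis ℕ ℂ E) (X : E →ₗ.[ℂ] E)

lemma dense_domain (hsa' : X.adjoint = X) : Dense (X.domain : Set E) :=
  (LinearPMap.isSelfAdjoint_def.mpr hsa').dense_domain

lemma pmap_symm (hsa' : X.adjoint = X) (φ ψ : X.domain) :
    ⟪X φ, (ψ : E)⟫_ℂ = ⟪(φ : E), X ψ⟫_ℂ := by
  obtain ⟨hdom, hfun⟩ := LinearPMap.ext_iff.mp hsa'
  have hmem : (φ : E) ∈ X.adjoint.domain := by rw [hdom]; exact φ.2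
  have happ : X.adjoint ⟨(φ : E), hmem⟩ = X φ := @hfun (φ : E) hmem φ.2
  have := LinearPMap.adjoint_isFormalAdjoint (dense_domain X hsa') ⟨(φ : E), hmem⟩ ψ
  rwa [happ] at this

lemma repr_pmap (hsa' : X.adjoint = X)
    (hb : ∀ q : ℕ, ∃ hq : (b q : E) ∈ X.domain, X ⟨b q, hq⟩ = ((q:ℂ)+1) • b q)
    (ψ : X.domain) (n : ℕ) :
    b.repr (X ψ) n = ((n:ℂ)+1) * b.repr ψ n := by
  obtain ⟨hq, hXq⟩ := hb n
  rw [b.repr_apply_apply, b.repr_apply_apply,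
    ← pmap_symm X hsa' ⟨b n, hq⟩ ψ, hXq, inner_smul_left]
  congr 1
  simp

lemma mem_pmap_domain (hsa' : X.adjoint = X)
    (hb : ∀ q : ℕ, ∃ hq : (b q : E) ∈ X.domain, X ⟨b q, hq⟩ = ((q:ℂ)+1) • b q)
    (ψ : E) (hsum : Memℓp (fun n : ℕ => ((n:ℂ)+1) * b.repr ψ n) 2) :
    ∃ hd : ψ ∈ X.domain,
      X ⟨ψ, hd⟩ = b.repr.symm (⟨fun n : ℕ => ((n:ℂ)+1) * b.repr ψ n, hsum⟩ :
        lp (fun _ : ℕ => ℂ) 2) := by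
  obtain ⟨hdom, hfun⟩ := LinearPMap.ext_iff.mp hsa'
  set η : E := b.repr.symm (⟨fun n : ℕ => ((n:ℂ)+1) * b.repr ψ n, hsum⟩ :
    lp (fun _ : ℕ => ℂ) 2) with hη
  have hreprη : ∀ n, b.repr η n = ((n:ℂ)+1) * b.repr ψ n := by
    intro n
    rw [hη, LinearIsometryEquiv.apply_symm_apply]
  have claim : ∀ x : X.domain, ⟪η, (x : E)⟫_ℂ = ⟪ψ, X x⟫_ℂ := by
    intro x
    rw [inner_eq_tsum_repr b, inner_eq_tsum_repr b]
    refine tsum_congr fun n => ?_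
    rw [hreprη, repr_pmap b X hsa' hb x n]
    have : (starRingEnd ℂ) ((n:ℂ)+1) = (n:ℂ)+1 := by
      simp
    rw [map_mul, this]
    ring
  have hmemadj : ψ ∈ X.adjoint.domain :=
    X.mem_adjoint_domain_of_exists ψ ⟨η, claim⟩
  have hdmem : ψ ∈ X.domain := by rw [← hdom]; exact hmemadj
  refine ⟨hdmem, ?_⟩
  have h1 : X.adjoint ⟨ψ, hmemadj⟩ = η :=
    LinearPMap.adjoint_apply_eq (dense_domain X hsa') ⟨ψ, hmemadj⟩ claim
  have h2 : X.adjoint ⟨ψ, hmemadj⟩ = X ⟨ψ, hdmem⟩ := @hfun ψ hmemadj hdmem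
  rw [← h2, h1]


def drho (K n : ℕ) : ℝ := ((K:ℝ)+1)/((K:ℝ)+(n:ℝ)+2)

def dXK (K n : ℕ) : ℝ := (((K:ℝ)+1)*((n:ℝ)+1))/((K:ℝ)+(n:ℝ)+2)

lemma den_pos (K n : ℕ) : (0:ℝ) < (K:ℝ)+(n:ℝ)+2 := by positivity

lemma drho_nonneg (K n : ℕ) : 0 ≤ drho K n := by
  unfold drho; positivity

lemma drho_bound (K : ℕ) : ∀ n, |drho K n| ≤ 1 := by
  intro n
  rw [_root_.abs_of_nonneg (drho_nonneg K n)]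
  unfold drho
  rw [div_le_one (den_pos K n)]
  have : (0:ℝ) ≤ (n:ℝ) := Nat.cast_nonneg n
  linarith

lemma dXK_bound (K : ℕ) : ∀ n, |dXK K n| ≤ (K:ℝ)+1 := by
  intro n
  have h1 : 0 ≤ dXK K n := by unfold dXK; positivity
  rw [_root_.abs_of_nonneg h1]
  unfold dXK
  rw [div_le_iff₀ (den_pos K n)]
  have h2 : (0:ℝ) ≤ (K:ℝ)+1 := by positivity
  have : (0:ℝ) ≤ (K:ℝ) := Nat.cast_nonneg K
  have : (0:ℝ) ≤ (n:ℝ) := Nat.cast_nonneg n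
  nlinarith



def rho (K : ℕ) : E →L[ℂ] E := diag b (drho K) 1 zero_le_one (drho_bound K)

def XKop (K : ℕ) : E →L[ℂ] E := diag b (dXK K) ((K:ℝ)+1) (by positivity) (dXK_bound K)

@[simp] lemma repr_rho (K : ℕ) (x : E) (n : ℕ) :
    b.repr (rho b K x) n = (drho K n : ℂ) * b.repr x n := repr_diag ..

@[simp] lemma repr_XKop (K : ℕ) (x : E) (n : ℕ) :
    b.repr (XKop b K x) n = (dXK K n : ℂ) * b.repr x n := repr_diag ..

lemma rho_norm_le (K : ℕ) (x : E) : ‖rho b K x‖ ≤ ‖x‖ := by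
  simpa [rho] using diag_norm_le b (drho K) 1 zero_le_one (drho_bound K) x

lemma rho_symm (K : ℕ) (x y : E) : ⟪rho b K x, y⟫_ℂ = ⟪x, rho b K y⟫_ℂ := diag_symm ..

lemma XKop_symm (K : ℕ) (x y : E) : ⟪XKop b K x, y⟫_ℂ = ⟪x, XKop b K y⟫_ℂ := diag_symm ..

lemma coeff_id1 (K n : ℕ) : ((n:ℂ)+1) * ((drho K n : ℝ):ℂ) = ((dXK K n : ℝ):ℂ) := by
  unfold drho dXK
  push_cast
  ring



lemma rho_mem (hsa' : X.adjoint = X)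
    (hb : ∀ q : ℕ, ∃ hq : (b q : E) ∈ X.domain, X ⟨b q, hq⟩ = ((q:ℂ)+1) • b q)
    (K : ℕ) (v : E) :
    ∃ h : rho b K v ∈ X.domain, X ⟨rho b K v, h⟩ = XKop b K v := by
  have hsum : Memℓp (fun n : ℕ => ((n:ℂ)+1) * b.repr (rho b K v) n) 2 := by
    refine memℓp_two_of_le (f := b.repr v) (C := (K:ℝ)+1) (fun n => ?_)
    rw [repr_rho, ← mul_assoc, coeff_id1, norm_mul, Complex.norm_real]
    refine mul_le_mul_of_nonneg_right ?_ (norm_nonneg _)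
    simpa [Real.norm_eq_abs] using dXK_bound K n
  obtain ⟨hd, hval⟩ := mem_pmap_domain b X hsa' hb _ hsum
  refine ⟨hd, ?_⟩
  rw [hval]
  apply b.repr.injective
  rw [LinearIsometryEquiv.apply_symm_apply]
  apply lp.ext; funext n
  show ((n:ℂ)+1) * b.repr (rho b K v) n = b.repr (XKop b K v) n
  rw [repr_rho, repr_XKop, ← mul_assoc, coeff_id1]

lemma XKop_eq_rho_pmap (hsa' : X.adjoint = X)
    (hb : ∀ q : ℕ, ∃ hq : (b q : E) ∈ X.domain, X ⟨b q, hq⟩ = ((q:ℂ)+1) • b q)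
    (K : ℕ) (ψ : X.domain) : XKop b K (ψ : E) = rho b K (X ψ) := by
  apply b.repr.injective
  apply lp.ext; funext n
  show b.repr (XKop b K (ψ:E)) n = b.repr (rho b K (X ψ)) n
  rw [repr_XKop, repr_rho, repr_pmap b X hsa' hb, ← mul_assoc, ← coeff_id1]
  ring

lemma XKop_norm_le_pmap (hsa' : X.adjoint = X)
    (hb : ∀ q : ℕ, ∃ hq : (b q : E) ∈ X.domain, X ⟨b q, hq⟩ = ((q:ℂ)+1) • b q)
    (K : ℕ) (ψ : X.domain) : ‖XKop b K (ψ : E)‖ ≤ ‖X ψ‖ := by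
  rw [XKop_eq_rho_pmap b X hsa' hb]
  exact rho_norm_le b K _


lemma drho_tendsto (n : ℕ) : Filter.Tendsto (fun K => drho K n) Filter.atTop (nhds 1) := by
  have h0 : Filter.Tendsto (fun K : ℕ => ((n:ℝ)+1)/((K:ℝ)+(n:ℝ)+2)) Filter.atTop (nhds 0) := by
    apply Filter.Tendsto.div_atTop (tendsto_const_nhds)
    have : Filter.Tendsto (fun K : ℕ => (K:ℝ)) Filter.atTop Filter.atTop :=
      tendsto_natCast_atTop_atTop
    have h5 := Filter.tendsto_atTop_add_const_right Filter.atTop ((n:ℝ)+2) this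
    refine h5.congr fun K => by ring
  have heq : ∀ K : ℕ, drho K n = 1 - ((n:ℝ)+1)/((K:ℝ)+(n:ℝ)+2) := by
    intro K
    unfold drho
    field_simp
    ring
  simp_rw [heq]
  simpa using (tendsto_const_nhds.sub h0)

lemma rho_tendsto (z : E) :
    Filter.Tendsto (fun K => rho b K z) Filter.atTop (nhds z) := by
  rw [tendsto_iff_norm_sub_tendsto_zero]
  have hnormsq : ∀ K, ‖rho b K z - z‖ ^ (2:ℕ) =
      ∑' n, ‖((drho K n : ℂ) - 1) * b.repr z n‖ ^ (2:ℕ) := by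
    intro K
    rw [← b.repr.norm_map (rho b K z - z), lp_norm_sq]
    refine tsum_congr fun n => ?_
    congr 1
    rw [map_sub]
    have : (b.repr (rho b K z) - b.repr z) n = b.repr (rho b K z) n - b.repr z n := rfl
    rw [this, repr_rho]
    ring
  have hsq : Filter.Tendsto (fun K => ∑' n, ‖((drho K n : ℂ) - 1) * b.repr z n‖ ^ (2:ℕ))
      Filter.atTop (nhds 0) := by
    have := tendsto_tsum_of_dominated_convergence
      (f := fun (K : ℕ) (n : ℕ) => ‖((drho K n : ℂ) - 1) * b.repr z n‖ ^ (2:ℕ))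
      (g := fun n : ℕ => (0:ℝ)) (bound := fun n => ‖b.repr z n‖ ^ (2:ℕ)) (𝓕 := Filter.atTop)
      (lp_summable_norm_sq (b.repr z)) ?_ ?_
    · simpa using this
    · intro n
      have h1 : Filter.Tendsto (fun K => ((drho K n : ℝ):ℂ)) Filter.atTop (nhds 1) := by
        have := (Complex.continuous_ofReal.tendsto 1).comp (drho_tendsto n)
        exact this
      have h2 : Filter.Tendsto (fun K : ℕ => (((drho K n : ℝ):ℂ) - 1) * b.repr z n)
          Filter.atTop (nhds 0) := by
        have h2a : Filter.Tendsto (fun K : ℕ => ((drho K n : ℝ):ℂ) - 1) Filter.atTop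
            (nhds (0:ℂ)) := by
          have := h1.sub (tendsto_const_nhds (x := (1:ℂ)) (f := Filter.atTop (α := ℕ)))
          simpa using this
        have h2b := h2a.mul_const ((b.repr z n : ℂ))
        simpa using h2b
      have := (continuous_norm.tendsto 0).comp h2
      simp only [norm_zero] at this
      simpa using (this.pow 2)
    · refine Filter.Eventually.of_forall fun K n => ?_
      have h3 : ‖((drho K n : ℂ) - 1) * b.repr z n‖ ≤ ‖b.repr z n‖ := by
        rw [norm_mul]
        have h4 : ‖((drho K n : ℝ):ℂ) - 1‖ ≤ 1 := by
          have hdb := abs_le.mp (drho_bound K n)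
          rw [show ((drho K n : ℝ):ℂ) - 1 = (((drho K n - 1 : ℝ)):ℂ) by push_cast; ring,
            Complex.norm_real, Real.norm_eq_abs, abs_le]
          have hd0 := drho_nonneg K n
          constructor <;> linarith [hdb.1, hdb.2, hd0]
        calc ‖((drho K n : ℝ):ℂ) - 1‖ * ‖b.repr z n‖ ≤ 1 * ‖b.repr z n‖ :=
              mul_le_mul_of_nonneg_right h4 (norm_nonneg _)
          _ = ‖b.repr z n‖ := one_mul _
      have h5 : ‖((drho K n : ℂ) - 1) * b.repr z n‖ ^ (2:ℕ) ≤ ‖b.repr z n‖ ^ (2:ℕ) := by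
        nlinarith [norm_nonneg (((drho K n : ℂ) - 1) * b.repr z n), norm_nonneg (b.repr z n)]
      calc ‖(fun (K n : ℕ) => ‖((drho K n : ℂ) - 1) * b.repr z n‖ ^ (2:ℕ)) K n‖
          = ‖((drho K n : ℂ) - 1) * b.repr z n‖ ^ (2:ℕ) := by
            rw [Real.norm_eq_abs, _root_.abs_of_nonneg (by positivity)]
        _ ≤ ‖b.repr z n‖ ^ (2:ℕ) := h5
  have := (Real.continuous_sqrt.tendsto 0).comp hsq
  rw [Real.sqrt_zero] at this
  refine Filter.Tendsto.congr (fun K => ?_) this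
  simp only [Function.comp_apply, ← hnormsq]
  rw [Real.sqrt_sq (norm_nonneg _)]

lemma rho_D_rho_tendsto (D : E →L[ℂ] E) (z : E) :
    Filter.Tendsto (fun K => rho b K (D (rho b K z))) Filter.atTop (nhds (D z)) := by
  rw [tendsto_iff_norm_sub_tendsto_zero]
  have t1 : Filter.Tendsto (fun K => ‖rho b K z - z‖) Filter.atTop (nhds 0) :=
    tendsto_iff_norm_sub_tendsto_zero.mp (rho_tendsto b z)
  have t2 : Filter.Tendsto (fun K => ‖rho b K (D z) - D z‖) Filter.atTop (nhds 0) :=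
    tendsto_iff_norm_sub_tendsto_zero.mp (rho_tendsto b (D z))
  have h1 : ∀ K, ‖rho b K (D (rho b K z)) - D z‖ ≤ ‖D‖ * ‖rho b K z - z‖ + ‖rho b K (D z) - D z‖ := by
    intro K
    have hsplit : rho b K (D (rho b K z)) - D z
        = rho b K (D (rho b K z - z)) + (rho b K (D z) - D z) := by
      rw [map_sub, map_sub]
      abel
    rw [hsplit]
    calc ‖rho b K (D (rho b K z - z)) + (rho b K (D z) - D z)‖
        ≤ ‖rho b K (D (rho b K z - z))‖ + ‖rho b K (D z) - D z‖ := norm_add_le _ _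
      _ ≤ ‖D (rho b K z - z)‖ + ‖rho b K (D z) - D z‖ := by
          have := rho_norm_le b K (D (rho b K z - z))
          linarith
      _ ≤ ‖D‖ * ‖rho b K z - z‖ + ‖rho b K (D z) - D z‖ := by
          have := D.le_opNorm (rho b K z - z)
          linarith
  refine squeeze_zero (fun K => norm_nonneg _) h1 ?_
  simpa using ((t1.const_mul ‖D‖).add t2)

lemma inv_decomp (K : ℕ) (v : E) :
    v = rho b K v + (((1/((K:ℝ)+1)) : ℝ):ℂ) • XKop b K v := by
  apply b.repr.injective
  apply lp.ext; funext n
  show b.repr v n = b.repr (rho b K v + _ • XKop b K v) n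
  rw [map_add, map_smul]
  have h1 : (b.repr (rho b K v) + (((1/((K:ℝ)+1)):ℝ):ℂ) • b.repr (XKop b K v)) n
      = b.repr (rho b K v) n + (((1/((K:ℝ)+1)):ℝ):ℂ) * b.repr (XKop b K v) n := rfl
  rw [h1, repr_rho, repr_XKop]
  have hden : ((K:ℝ)+(n:ℝ)+2) ≠ 0 := ne_of_gt (den_pos K n)
  have hK : ((K:ℝ)+1) ≠ 0 := by positivity
  have hreal : (1:ℝ) = drho K n + (1/((K:ℝ)+1)) * dXK K n := by
    unfold drho dXK
    field_simp
    ring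
  have hcx : (1:ℂ) = ((drho K n:ℝ):ℂ) + (((1/((K:ℝ)+1)):ℝ):ℂ) * ((dXK K n:ℝ):ℂ) := by
    rw [← Complex.ofReal_mul, ← Complex.ofReal_add, ← hreal]
    simp
  calc b.repr v n = 1 * b.repr v n := (one_mul _).symm
    _ = _ := by rw [hcx]; ring

lemma comm_form (hsa' : X.adjoint = X)
    (hb : ∀ q : ℕ, ∃ hq : (b q : E) ∈ X.domain, X ⟨b q, hq⟩ = ((q:ℂ)+1) • b q)
    (Hop D : E →L[ℂ] E)
    (hD : ∀ φ ψ : X.domain, ⟪X φ, Hop (ψ : E)⟫_ℂ - ⟪(φ : E), Hop (X ψ)⟫_ℂ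
      = ⟪(φ : E), D (ψ : E)⟫_ℂ)
    (K : ℕ) (v w : E) :
    ⟪XKop b K v, Hop w⟫_ℂ - ⟪v, Hop (XKop b K w)⟫_ℂ
      = ⟪rho b K v, D (rho b K w)⟫_ℂ := by
  obtain ⟨hav, hXa⟩ := rho_mem b X hsa' hb K v
  obtain ⟨haw, hXb⟩ := rho_mem b X hsa' hb K w
  set a : X.domain := ⟨rho b K v, hav⟩ with ha_def
  set a' : X.domain := ⟨rho b K w, haw⟩ with ha'_def
  set cc : ℂ := (((1/((K:ℝ)+1)) : ℝ):ℂ) with hcc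
  have hXa' : X a = XKop b K v := hXa
  have hXb' : X a' = XKop b K w := hXb
  have hv : v = rho b K v + cc • XKop b K v := inv_decomp b K v
  have hw : w = rho b K w + cc • XKop b K w := inv_decomp b K w
  have h1 : ⟪XKop b K v, Hop w⟫_ℂ
      = ⟪XKop b K v, Hop (rho b K w)⟫_ℂ + cc * ⟪XKop b K v, Hop (XKop b K w)⟫_ℂ := by
    conv_lhs => rw [hw]
    rw [map_add, map_smul, inner_add_right, inner_smul_right]
  have h2 : ⟪v, Hop (XKop b K w)⟫_ℂ
      = ⟪rho b K v, Hop (XKop b K w)⟫_ℂ + cc * ⟪XKop b K v, Hop (XKop b K w)⟫_ℂ := by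
    conv_lhs => rw [hv]
    rw [inner_add_left, inner_smul_left, hcc, Complex.conj_ofReal]
  have hDa := hD a a'
  rw [hXa', hXb'] at hDa
  have hDa' : ⟪XKop b K v, Hop (rho b K w)⟫_ℂ - ⟪rho b K v, Hop (XKop b K w)⟫_ℂ
      = ⟪rho b K v, D (rho b K w)⟫_ℂ := hDa
  rw [h1, h2]
  linear_combination hDa'

lemma comm_vec (hsa' : X.adjoint = X)
    (hb : ∀ q : ℕ, ∃ hq : (b q : E) ∈ X.domain, X ⟨b q, hq⟩ = ((q:ℂ)+1) • b q)
    (Hop D : E →L[ℂ] E)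
    (hD : ∀ φ ψ : X.domain, ⟪X φ, Hop (ψ : E)⟫_ℂ - ⟪(φ : E), Hop (X ψ)⟫_ℂ
      = ⟪(φ : E), D (ψ : E)⟫_ℂ)
    (K : ℕ) (w : E) :
    XKop b K (Hop w) - Hop (XKop b K w) = rho b K (D (rho b K w)) := by
  apply ext_inner_left ℂ
  intro v
  rw [inner_sub_right]
  have e1 : ⟪v, XKop b K (Hop w)⟫_ℂ = ⟪XKop b K v, Hop w⟫_ℂ := (XKop_symm b K v (Hop w)).symm
  have e2 : ⟪v, rho b K (D (rho b K w))⟫_ℂ = ⟪rho b K v, D (rho b K w)⟫_ℂ :=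
    (rho_symm b K v (D (rho b K w))).symm
  rw [e1, e2]
  exact comm_form b X hsa' hb Hop D hD K v w

end PosOp

section Exp

variable (Hop : E →L[ℂ] E)

def Bop : E →L[ℂ] E := Complex.I • Hop

def Ugrp (s : ℝ) : E →L[ℂ] E := NormedSpace.exp (s • Bop Hop)

lemma exp_eq_Ugrp (s : ℝ) :
    NormedSpace.exp ((Complex.I * (s:ℂ)) • Hop) = Ugrp Hop s := by
  rw [Ugrp]
  congr 1
  rw [Bop, ← smul_assoc]
  norm_num [Complex.real_smul, mul_comm]

lemma Ugrp_mul (s t : ℝ) : Ugrp Hop s * Ugrp Hop t = Ugrp Hop (s + t) := by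
  let +nondep : NormedAlgebra ℚ (E →L[ℂ] E) := .restrictScalars ℚ ℂ (E →L[ℂ] E)
  rw [Ugrp, Ugrp, Ugrp, ← NormedSpace.exp_add_of_commute, add_smul]
  exact ((Commute.refl (Bop Hop)).smul_left s).smul_right t

lemma Ugrp_zero : Ugrp Hop 0 = 1 := by
  rw [Ugrp, zero_smul, NormedSpace.exp_zero]

lemma Ugrp_star (hsa : IsSelfAdjoint Hop) (s : ℝ) :
    star (Ugrp Hop s) = Ugrp Hop (-s) := by
  rw [Ugrp, Ugrp, NormedSpace.star_exp]
  congr 1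
  rw [star_smul, star_trivial, Bop, star_smul, hsa.star_eq]
  simp [neg_smul, smul_neg]

lemma Ugrp_inner (hsa : IsSelfAdjoint Hop) (s : ℝ) (x y : E) :
    ⟪Ugrp Hop s x, Ugrp Hop s y⟫_ℂ = ⟪x, y⟫_ℂ := by
  have h1 : ⟪Ugrp Hop s x, Ugrp Hop s y⟫_ℂ
      = ⟪x, (ContinuousLinearMap.adjoint (Ugrp Hop s)) (Ugrp Hop s y)⟫_ℂ := by
    rw [ContinuousLinearMap.adjoint_inner_right]
  rw [h1, ← ContinuousLinearMap.star_eq_adjoint, Ugrp_star Hop hsa,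
    ← ContinuousLinearMap.comp_apply, ← ContinuousLinearMap.mul_def, Ugrp_mul]
  norm_num [Ugrp_zero]

lemma Ugrp_norm (hsa : IsSelfAdjoint Hop) (s : ℝ) (x : E) :
    ‖Ugrp Hop s x‖ = ‖x‖ := by
  have h2 : RCLike.re ⟪Ugrp Hop s x, Ugrp Hop s x⟫_ℂ = RCLike.re ⟪x, x⟫_ℂ := by
    rw [Ugrp_inner Hop hsa]
  rw [inner_self_eq_norm_sq, inner_self_eq_norm_sq] at h2
  rw [← Real.sqrt_sq (norm_nonneg (Ugrp Hop s x)), h2, Real.sqrt_sq (norm_nonneg x)]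

lemma Ugrp_hasDerivAt (s : ℝ) (x : E) :
    HasDerivAt (fun r => Ugrp Hop r x) (Ugrp Hop s (Bop Hop x)) s := by
  have h := hasDerivAt_exp_smul_const (𝕂 := ℝ) (Bop Hop) s
  have h2 := ((ContinuousLinearMap.apply ℂ E x).restrictScalars
    ℝ).hasFDerivAt.comp_hasDerivAt s h
  simpa [Ugrp, ContinuousLinearMap.apply, Function.comp_def] using h2

lemma Ugrp_neg_hasDerivAt (s : ℝ) (x : E) :
    HasDerivAt (fun r => Ugrp Hop (-r) x) (-(Ugrp Hop (-s) (Bop Hop x))) s := by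
  have h := (Ugrp_hasDerivAt Hop (-s) x).scomp s (hasDerivAt_neg s)
  simpa [Function.comp_def] using h

lemma Ugrp_cont : Continuous fun s : ℝ => Ugrp Hop s := by
  rw [continuous_iff_continuousAt]
  intro s
  exact (hasDerivAt_exp_smul_const (𝕂 := ℝ) (Bop Hop) s).continuousAt

lemma Ugrp_apply_cont (x : E) : Continuous fun s : ℝ => Ugrp Hop s x := by
  rw [continuous_iff_continuousAt]
  intro s
  exact (Ugrp_hasDerivAt Hop s x).continuousAt

lemma hasDerivAt_clm_apply_c {c : ℝ → E →L[ℂ] E} {c' : E →L[ℂ] E} {f : ℝ → E} {f' : E} {s : ℝ}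
    (hc : HasDerivAt c c' s) (hf : HasDerivAt f f' s) :
    HasDerivAt (fun r => c r (f r)) (c s f' + c' (f s)) s := by
  have hbil : IsBoundedBilinearMap ℂ fun p : (E →L[ℂ] E) × E => p.1 p.2 :=
    isBoundedBilinearMap_apply
  have h1 := (hbil.hasFDerivAt (c s, f s)).restrictScalars ℝ
  have h2 := hc.prodMk hf
  have h3 := h1.comp_hasDerivAt s h2
  have h4 : (hbil.deriv (c s, f s)) (c', f') = c s f' + c' (f s) := by
    rw [hbil.deriv_apply]
  simpa [h4, Function.comp_def] using h3

lemma Bop_Ugrp_comm (s : ℝ) (x : E) :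
    Bop Hop (Ugrp Hop s x) = Ugrp Hop s (Bop Hop x) := by
  have hc : Commute (Bop Hop) (NormedSpace.exp (s • Bop Hop)) :=
    (((Commute.refl (Bop Hop)).smul_right s)).exp_right
  calc Bop Hop (Ugrp Hop s x) = (Bop Hop * Ugrp Hop s) x := rfl
    _ = (Ugrp Hop s * Bop Hop) x := by rw [show Bop Hop * Ugrp Hop s = Ugrp Hop s * Bop Hop from hc.eq]
    _ = Ugrp Hop s (Bop Hop x) := rfl

lemma Ugrp_cancel (s : ℝ) (x : E) : Ugrp Hop s (Ugrp Hop (-s) x) = x := by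
  have h : Ugrp Hop s * Ugrp Hop (-s) = 1 := by
    rw [Ugrp_mul]; norm_num [Ugrp_zero]
  calc Ugrp Hop s (Ugrp Hop (-s) x) = (Ugrp Hop s * Ugrp Hop (-s)) x := rfl
    _ = x := by rw [h]; rfl

lemma Ugrp_op_hasDerivAt (s : ℝ) :
    HasDerivAt (fun r : ℝ => Ugrp Hop r) (Ugrp Hop s * Bop Hop) s :=
  hasDerivAt_exp_smul_const (𝕂 := ℝ) (Bop Hop) s

lemma Ugrp_neg_op_hasDerivAt (s : ℝ) :
    HasDerivAt (fun r : ℝ => Ugrp Hop (-r)) (-(Ugrp Hop (-s) * Bop Hop)) s := by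
  have h := (Ugrp_op_hasDerivAt Hop (-s)).scomp s (hasDerivAt_neg s)
  simpa [Function.comp_def] using h

end Exp

end Stmt19Aux


/-- For a bounded self-adjoint `H ∈ C¹(X)` on `ℓ²(ℕ)`:
`‖e^{iHt}φ‖_X² − ‖φ‖_X² = 2∫₀ᵗ Re⟨i(ad_X H)e^{iHs}φ, X e^{iHs}φ⟩ ds`, where
`‖ψ‖_X² = ‖ψ‖² + ‖Xψ‖²` and `gX s = X e^{iHs} φ`. -/
theorem stmt_19 (e : ℕ → E) (he : IsONBasis e)
    (X : E →ₗ.[ℂ] E) (hX : IsPosOp e X)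
    (Hop : E →L[ℂ] E) (hsa : IsSelfAdjoint Hop)
    (D : E →L[ℂ] E) (hD : CommutatorOf X Hop D) :
    ∀ φ : X.domain, ∀ gX : ℝ → E,
      (∀ s : ℝ, ∃ h : (expIt Hop s) (φ : E) ∈ X.domain,
        gX s = X ⟨(expIt Hop s) (φ : E), h⟩) →
      ∀ t : ℝ,
        (‖(expIt Hop t) (φ : E)‖ ^ 2 + ‖gX t‖ ^ 2) - (‖(φ : E)‖ ^ 2 + ‖X φ‖ ^ 2) =
          2 * ∫ s in (0:ℝ)..t, (⟪(Complex.I • D) ((expIt Hop s) (φ : E)), gX s⟫_ℂ).re := by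
  classical
  obtain ⟨honb, hsp⟩ := he
  obtain ⟨hsa', hXe⟩ := hX
  intro φ gX hgX0 t
  set b : HilbertBasis ℕ ℂ E := HilbertBasis.mk honb (le_of_eq hsp.symm) with hbdef
  have hbe : ∀ q, (b q : E) = e q := fun q => congrFun (HilbertBasis.coe_mk _ _) q
  have hb : ∀ q : ℕ, ∃ hq : (b q : E) ∈ X.domain, X ⟨b q, hq⟩ = ((q:ℂ)+1) • b q := by
    intro q
    obtain ⟨hq, h⟩ := hXe q
    have hbq : (b q : E) = e q := hbe q
    refine ⟨hbq ▸ hq, ?_⟩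
    have h2 : (⟨(b q : E), hbq ▸ hq⟩ : X.domain) = ⟨e q, hq⟩ := Subtype.ext hbq
    rw [h2, h, hbq]
  have hexp : ∀ s : ℝ, expIt Hop s = Stmt19Aux.Ugrp Hop s := fun s =>
    Stmt19Aux.exp_eq_Ugrp Hop s
  simp only [hexp] at hgX0 ⊢
  set U : ℝ → E →L[ℂ] E := Stmt19Aux.Ugrp Hop with hUdef
  set u : ℝ → E := fun s => U s (φ : E) with hudef
  have hgmem : ∀ s : ℝ, u s ∈ X.domain := fun s => (hgX0 s).choose
  have hgval : ∀ s : ℝ, gX s = X ⟨u s, hgmem s⟩ := fun s => (hgX0 s).choose_spec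
  have hucont : Continuous u := Stmt19Aux.Ugrp_apply_cont Hop (φ : E)
  have hunorm : ∀ s, ‖u s‖ = ‖(φ : E)‖ := fun s => Stmt19Aux.Ugrp_norm Hop hsa s _
  -- the approximating curves
  set wK : ℕ → ℝ → E := fun K s => U (-s) (Stmt19Aux.XKop b K (u s)) with hwKdef
  set kK : ℕ → ℝ → E := fun K s =>
    U (-s) (Complex.I • Stmt19Aux.rho b K (D (Stmt19Aux.rho b K (u s)))) with hkKdef
  set w : ℝ → E := fun s => U (-s) (gX s) with hwdef
  set k : ℝ → E := fun s => U (-s) (Complex.I • D (u s)) with hkdef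
  -- derivative of wK
  have hkKd : ∀ K s, HasDerivAt (wK K) (kK K s) s := by
    intro K s
    have hc := Stmt19Aux.Ugrp_neg_op_hasDerivAt Hop s
    have hf : HasDerivAt (fun r => Stmt19Aux.XKop b K (u r))
        (Stmt19Aux.XKop b K (U s (Stmt19Aux.Bop Hop (φ : E)))) s :=
      ((Stmt19Aux.XKop b K).restrictScalars ℝ).hasFDerivAt.comp_hasDerivAt s
        (Stmt19Aux.Ugrp_hasDerivAt Hop s (φ : E))
    have h := Stmt19Aux.hasDerivAt_clm_apply_c hc hf
    have hcomm : U s (Stmt19Aux.Bop Hop (φ : E)) = Stmt19Aux.Bop Hop (u s) :=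
      (Stmt19Aux.Bop_Ugrp_comm Hop s (φ : E)).symm
    rw [hcomm] at h
    have hvec : Stmt19Aux.XKop b K (Stmt19Aux.Bop Hop (u s))
        - Stmt19Aux.Bop Hop (Stmt19Aux.XKop b K (u s))
        = Complex.I • Stmt19Aux.rho b K (D (Stmt19Aux.rho b K (u s))) := by
      have h1 : Stmt19Aux.XKop b K (Stmt19Aux.Bop Hop (u s))
          = Complex.I • Stmt19Aux.XKop b K (Hop (u s)) := by
        show Stmt19Aux.XKop b K (Complex.I • Hop (u s)) = _
        rw [map_smul]
      have h2 : Stmt19Aux.Bop Hop (Stmt19Aux.XKop b K (u s))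
          = Complex.I • Hop (Stmt19Aux.XKop b K (u s)) := rfl
      rw [h1, h2, ← smul_sub,
        Stmt19Aux.comm_vec b X hsa' hb Hop D hD K (u s)]
    have hval : U (-s) (Stmt19Aux.XKop b K (Stmt19Aux.Bop Hop (u s)))
        + (-(U (-s) * Stmt19Aux.Bop Hop)) (Stmt19Aux.XKop b K (u s)) = kK K s := by
      have h3 : (-(U (-s) * Stmt19Aux.Bop Hop)) (Stmt19Aux.XKop b K (u s))
          = -(U (-s) (Stmt19Aux.Bop Hop (Stmt19Aux.XKop b K (u s)))) := rfl
      rw [h3]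
      show _ = U (-s) (Complex.I • Stmt19Aux.rho b K (D (Stmt19Aux.rho b K (u s))))
      rw [← hvec, map_sub]
      abel
    rw [← hval]
    exact h
  -- continuity of kK, k
  have hUnegcont : Continuous fun s : ℝ => U (-s) :=
    (Stmt19Aux.Ugrp_cont Hop).comp continuous_neg
  have hkKcont : ∀ K, Continuous (kK K) := by
    intro K
    refine hUnegcont.clm_apply ?_
    exact ((Stmt19Aux.rho b K).continuous.comp
      (D.continuous.comp ((Stmt19Aux.rho b K).continuous.comp hucont))).const_smul Complex.I
  have hkcont : Continuous k := by
    refine hUnegcont.clm_apply ?_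
    exact (D.continuous.comp hucont).const_smul Complex.I
  -- FTC for wK
  have hwKftc : ∀ K (r : ℝ), (∫ s in (0:ℝ)..r, kK K s) = wK K r - wK K 0 := by
    intro K r
    exact intervalIntegral.integral_eq_sub_of_hasDerivAt (fun s _ => hkKd K s)
      ((hkKcont K).intervalIntegrable 0 r)
  -- limits
  have hXKu : ∀ K s, Stmt19Aux.XKop b K (u s) = Stmt19Aux.rho b K (gX s) := by
    intro K s
    rw [Stmt19Aux.XKop_eq_rho_pmap b X hsa' hb K ⟨u s, hgmem s⟩, ← hgval s]
  have hwlim : ∀ s, Filter.Tendsto (fun K => wK K s) Filter.atTop (nhds (w s)) := by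
    intro s
    have h0 := Stmt19Aux.rho_tendsto b (gX s)
    have h1 := ((U (-s)).continuous.tendsto (gX s)).comp h0
    refine h1.congr fun K => ?_
    simp only [Function.comp_apply, hwKdef, hXKu]
  have hklim : ∀ s, Filter.Tendsto (fun K => kK K s) Filter.atTop (nhds (k s)) := by
    intro s
    have h0 := Stmt19Aux.rho_D_rho_tendsto b D (u s)
    have hmap : Continuous fun z : E => U (-s) (Complex.I • z) :=
      (U (-s)).continuous.comp (continuous_id.const_smul Complex.I)
    exact (hmap.tendsto (D (u s))).comp h0
  -- uniform bound
  have hbound : ∀ K s, ‖kK K s‖ ≤ ‖D‖ * ‖(φ : E)‖ := by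
    intro K s
    have h1 : ‖kK K s‖ = ‖Complex.I • Stmt19Aux.rho b K (D (Stmt19Aux.rho b K (u s)))‖ :=
      Stmt19Aux.Ugrp_norm Hop hsa (-s) _
    rw [h1, norm_smul]
    simp only [Complex.norm_I, one_mul]
    calc ‖Stmt19Aux.rho b K (D (Stmt19Aux.rho b K (u s)))‖
        ≤ ‖D (Stmt19Aux.rho b K (u s))‖ := Stmt19Aux.rho_norm_le b K _
      _ ≤ ‖D‖ * ‖Stmt19Aux.rho b K (u s)‖ := D.le_opNorm _
      _ ≤ ‖D‖ * ‖u s‖ := by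
          have := Stmt19Aux.rho_norm_le b K (u s)
          exact mul_le_mul_of_nonneg_left this (norm_nonneg D)
      _ = ‖D‖ * ‖(φ : E)‖ := by rw [hunorm]
  -- dominated convergence
  have hInt : ∀ r : ℝ, Filter.Tendsto (fun K => ∫ s in (0:ℝ)..r, kK K s) Filter.atTop
      (nhds (∫ s in (0:ℝ)..r, k s)) := by
    intro r
    refine intervalIntegral.tendsto_integral_filter_of_dominated_convergence
      (bound := fun _ => ‖D‖ * ‖(φ : E)‖) ?_ ?_ ?_ ?_
    · exact Filter.Eventually.of_forall fun K => ((hkKcont K).aestronglyMeasurable)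
    · exact Filter.Eventually.of_forall fun K =>
        MeasureTheory.ae_of_all _ fun s _ => hbound K s
    · exact intervalIntegrable_const
    · exact MeasureTheory.ae_of_all _ fun s _ => hklim s
  -- w 0 = X φ
  have hu0 : u 0 = (φ : E) := by
    rw [hudef]
    show U 0 (φ : E) = (φ : E)
    rw [hUdef, Stmt19Aux.Ugrp_zero]
    rfl
  have hgX0eq : gX 0 = X φ := by
    rw [hgval 0]
    congr 1
    exact Subtype.ext hu0
  have hw0 : w 0 = X φ := by
    rw [hwdef]
    show U (-0) (gX 0) = X φ
    rw [neg_zero, hUdef, Stmt19Aux.Ugrp_zero, hgX0eq]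
    rfl
  -- integral representation of w
  have hweq : ∀ r : ℝ, w r = X φ + ∫ s in (0:ℝ)..r, k s := by
    intro r
    have h1 : Filter.Tendsto (fun K => wK K r - wK K 0) Filter.atTop (nhds (w r - w 0)) :=
      (hwlim r).sub (hwlim 0)
    have h2 : (fun K => ∫ s in (0:ℝ)..r, kK K s) = fun K => wK K r - wK K 0 :=
      funext fun K => hwKftc K r
    have h3 : w r - w 0 = ∫ s in (0:ℝ)..r, k s :=
      tendsto_nhds_unique h1 (h2 ▸ (hInt r))
    rw [hw0] at h3
    rw [← h3]
    abel
  -- derivative of w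
  have hwd : ∀ r : ℝ, HasDerivAt w (k r) r := by
    intro r
    have hfun : w = fun r => X φ + ∫ s in (0:ℝ)..r, k s := funext hweq
    rw [hfun]
    exact ((hkcont.integral_hasStrictDerivAt 0 r).hasDerivAt).const_add (X φ : E)
  have hwcont : Continuous w := by
    rw [continuous_iff_continuousAt]
    exact fun r => (hwd r).continuousAt
  -- gX in terms of w
  have hgXeq : ∀ s, gX s = U s (w s) := by
    intro s
    rw [hwdef]
    show gX s = U s (U (-s) (gX s))
    rw [hUdef]
    exact (Stmt19Aux.Ugrp_cancel Hop s (gX s)).symm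
  have hgXcont : Continuous gX := by
    have : Continuous fun s => U s (w s) :=
      (Stmt19Aux.Ugrp_cont Hop).clm_apply hwcont
    rw [funext hgXeq]
    exact this
  -- the integrand
  set g2 : ℝ → ℝ := fun s => (⟪(Complex.I • D) (u s), gX s⟫_ℂ).re with hg2def
  have hg2cont : Continuous g2 := by
    have h1 : Continuous fun s => (⟪(Complex.I • D) (u s), gX s⟫_ℂ) := by
      refine Continuous.inner ?_ hgXcont
      exact ((D.continuous.comp hucont).const_smul Complex.I).congr fun s => rfl
    exact Complex.continuous_re.comp h1
  -- derivative of s ↦ re ⟪w s, w s⟫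
  have hF : ∀ r : ℝ, HasDerivAt (fun s => (⟪w s, w s⟫_ℂ).re) (2 * g2 r) r := by
    intro r
    have h1 := (hwd r).inner ℂ (hwd r)
    have h2 := Complex.reCLM.hasFDerivAt.comp_hasDerivAt r h1
    have h3 : Complex.reCLM (⟪w r, k r⟫_ℂ + ⟪k r, w r⟫_ℂ) = 2 * g2 r := by
      have hkw : ⟪k r, w r⟫_ℂ = ⟪(Complex.I • D) (u r), gX r⟫_ℂ := by
        rw [hkdef, hwdef]
        show ⟪U (-r) (Complex.I • D (u r)), U (-r) (gX r)⟫_ℂ = _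
        rw [hUdef, Stmt19Aux.Ugrp_inner Hop hsa]
        rfl
      have hwk : ⟪w r, k r⟫_ℂ = (starRingEnd ℂ) ⟪k r, w r⟫_ℂ := (inner_conj_symm _ _).symm
      rw [map_add, hwk]
      rw [hkw]
      simp only [Complex.reCLM_apply, Complex.add_re, Complex.conj_re]
      rw [hg2def]
      ring
    rw [← h3]
    exact h2
  -- final FTC
  have hFTC : (∫ s in (0:ℝ)..t, 2 * g2 s) = (⟪w t, w t⟫_ℂ).re - (⟪w 0, w 0⟫_ℂ).re :=
    intervalIntegral.integral_eq_sub_of_hasDerivAt (fun s _ => hF s)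
      ((continuous_const.mul hg2cont).intervalIntegrable 0 t)
  have hconst : (∫ s in (0:ℝ)..t, 2 * g2 s) = 2 * ∫ s in (0:ℝ)..t, g2 s :=
    intervalIntegral.integral_const_mul 2 g2
  -- norms
  have hnorm_sq : ∀ z : E, (⟪z, z⟫_ℂ).re = ‖z‖ ^ 2 := by
    intro z
    have := inner_self_eq_norm_sq (𝕜 := ℂ) z
    exact this
  have hwt : (⟪w t, w t⟫_ℂ).re = ‖gX t‖ ^ 2 := by
    rw [hnorm_sq]
    have : ‖w t‖ = ‖gX t‖ := by
      rw [hwdef]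
      exact Stmt19Aux.Ugrp_norm Hop hsa (-t) (gX t)
    rw [this]
  have hw0' : (⟪w 0, w 0⟫_ℂ).re = ‖(X φ : E)‖ ^ 2 := by
    rw [hnorm_sq, hw0]
  have hut : ‖u t‖ = ‖(φ : E)‖ := hunorm t
  calc (‖U t (φ : E)‖ ^ 2 + ‖gX t‖ ^ 2) - (‖(φ : E)‖ ^ 2 + ‖X φ‖ ^ 2)
      = (⟪w t, w t⟫_ℂ).re - (⟪w 0, w 0⟫_ℂ).re := by
        rw [hwt, hw0']
        have : ‖U t (φ : E)‖ = ‖(φ : E)‖ := hunorm t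
        rw [this]
        ring
    _ = ∫ s in (0:ℝ)..t, 2 * g2 s := hFTC.symm
    _ = 2 * ∫ s in (0:ℝ)..t, g2 s := hconst
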